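/- Let (κᵢ) be a nonnegative real sequence, (wᵢ) a nonincreasing sequence in (0,1) with aₙ = Σ_{i=1}^n wᵢ → ∞, and suppose (1/n) Σ_{i=1}^n aᵢ κᵢ is bounded and Σ_{j=1}^∞ wⱼ κⱼ = S < ∞. Then (aₙ/n) Σ_{i=1}^n κᵢ is bounded. -/

import Mathlib

open Finset Filter

theorem rate_lemma_bounded
    (w κ : ℕ → ℝ)
    (hw01 : ∀ i, w i ∈ Set.Ioo (0 : ℝ) 1)
    (hwmono : Antitone w)
    (hκ : ∀ i, 0 ≤ κ i)
    (a : ℕ → ℝ) (ha : ∀ n, a n = ∑ i ∈ Finset.range n, w i)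
    (ha_top : Tendsto a atTop atTop)
    (C₁ : ℝ)
    (hbdd : ∀ n : ℕ, (1 / (n : ℝ)) * ∑ i ∈ Finset.range n, a (i + 1) * κ i ≤ C₁)
    (S : ℝ) (hS : HasSum (fun j => w j * κ j) S) :
    ∃ C : ℝ, ∀ n : ℕ, (a n / (n : ℝ)) * ∑ i ∈ Finset.range n, κ i ≤ C := by
  refine ⟨max 0 (C₁ + S), fun n => ?_⟩
  rcases Nat.eq_zero_or_pos n with rfl | hn
  · simp
  have hn' : (0:ℝ) < n := by exact_mod_cast hn
  have hwpos : ∀ i, 0 ≤ w i := fun i => (hw01 i).1.le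
  -- key pointwise bound
  have key : ∀ i ∈ Finset.range n, a n * κ i ≤ a (i+1) * κ i + (n:ℝ) * (w i * κ i) := by
    intro i hi
    have hi' := Finset.mem_range.mp hi
    have h1 : a n - a (i+1) = ∑ j ∈ Finset.Ico (i+1) n, w j := by
      rw [ha, ha, Finset.sum_Ico_eq_sub _ (by omega)]
    have h2 : ∑ j ∈ Finset.Ico (i+1) n, w j ≤ (n:ℝ) * w i := by
      calc ∑ j ∈ Finset.Ico (i+1) n, w j
          ≤ ∑ _j ∈ Finset.Ico (i+1) n, w i := by
            refine Finset.sum_le_sum fun j hj => hwmono ?_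
            have := (Finset.mem_Ico.mp hj).1; omega
        _ = ((n - (i+1) : ℕ) : ℝ) * w i := by
            rw [Finset.sum_const, Nat.card_Ico]; simp [nsmul_eq_mul]
        _ ≤ (n:ℝ) * w i := by
            apply mul_le_mul_of_nonneg_right _ (hwpos i)
            exact_mod_cast Nat.sub_le n (i+1)
    have h3 : (a n - a (i+1)) * κ i ≤ ((n:ℝ) * w i) * κ i := by
      apply mul_le_mul_of_nonneg_right _ (hκ i)
      rw [h1]; exact h2
    nlinarith [h3]
  have hsum1 : ∑ i ∈ Finset.range n, a (i+1) * κ i ≤ (n:ℝ) * C₁ := by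
    have := hbdd n
    rw [one_div, inv_mul_le_iff₀ hn'] at this
    linarith [this]
  have hsum2 : ∑ i ∈ Finset.range n, w i * κ i ≤ S :=
    sum_le_hasSum _ (fun i _ => mul_nonneg (hwpos i) (hκ i)) hS
  have hmain : a n * ∑ i ∈ Finset.range n, κ i ≤ (n:ℝ) * C₁ + (n:ℝ) * S := by
    calc a n * ∑ i ∈ Finset.range n, κ i
        = ∑ i ∈ Finset.range n, a n * κ i := by rw [Finset.mul_sum]
      _ ≤ ∑ i ∈ Finset.range n, (a (i+1) * κ i + (n:ℝ) * (w i * κ i)) :=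
          Finset.sum_le_sum key
      _ = (∑ i ∈ Finset.range n, a (i+1) * κ i)
          + (n:ℝ) * ∑ i ∈ Finset.range n, w i * κ i := by
          rw [Finset.sum_add_distrib, Finset.mul_sum]
      _ ≤ (n:ℝ) * C₁ + (n:ℝ) * S := by
          have : (n:ℝ) * ∑ i ∈ Finset.range n, w i * κ i ≤ (n:ℝ) * S :=
            mul_le_mul_of_nonneg_left hsum2 hn'.le
          linarith
  have : a n / (n:ℝ) * ∑ i ∈ Finset.range n, κ i ≤ C₁ + S := by
    rw [div_mul_eq_mul_div, div_le_iff₀ hn']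
    linarith [hmain]
  exact this.trans (le_max_right _ _)
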